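/- Uniformity of the homogenized distribution: suppose for each x in a finite set 𝕏, ratios satisfy |n·p_x/C_x - 1| ≤ α with 0 < α ≤ 1/2, p_x > 0, C_x > 0, and define r_x = (p_x/C_x)/Σ_z (p_z/C_z). Then |r_x - 1/|𝕏|| ≤ 4α/|𝕏| for every x. -/

import Mathlib

theorem homogenized_uniformity {𝕏 : Type*} [Fintype 𝕏] [Nonempty 𝕏]
    (n α : ℝ) (hn : 0 < n) (hα0 : 0 < α) (hα1 : α ≤ 1 / 2)
    (p C : 𝕏 → ℝ) (hp : ∀ x, 0 < p x) (hC : ∀ x, 0 < C x)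
    (hclose : ∀ x, |n * p x / C x - 1| ≤ α)
    (r : 𝕏 → ℝ) (hr : ∀ x, r x = (p x / C x) / ∑ z, p z / C z) (x : 𝕏) :
    |r x - 1 / (Fintype.card 𝕏 : ℝ)| ≤ 4 * α / (Fintype.card 𝕏 : ℝ) := by
  have hN : (0:ℝ) < (Fintype.card 𝕏 : ℝ) := by exact_mod_cast Fintype.card_pos
  have hα1' : α < 1 := lt_of_le_of_lt hα1 (by norm_num)
  have hq : ∀ z, 1 - α ≤ n * (p z / C z) ∧ n * (p z / C z) ≤ 1 + α := by
    intro z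
    have h := abs_le.mp (hclose z)
    have h' : n * (p z / C z) = n * p z / C z := (mul_div_assoc n (p z) (C z)).symm
    rw [h']
    constructor <;> linarith [h.1, h.2]
  set S := ∑ z, p z / C z with hS
  have hnS : n * S = ∑ z, n * (p z / C z) := by rw [hS, Finset.mul_sum]
  have hSl : (Fintype.card 𝕏 : ℝ) * (1 - α) ≤ n * S := by
    rw [hnS]
    calc (Fintype.card 𝕏 : ℝ) * (1 - α)
        = ∑ _z : 𝕏, (1 - α) := by rw [Finset.sum_const, Finset.card_univ, nsmul_eq_mul]
      _ ≤ ∑ z, n * (p z / C z) := Finset.sum_le_sum fun z _ => (hq z).1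
  have hSu : n * S ≤ (Fintype.card 𝕏 : ℝ) * (1 + α) := by
    rw [hnS]
    calc (∑ z, n * (p z / C z))
        ≤ ∑ _z : 𝕏, (1 + α) := Finset.sum_le_sum fun z _ => (hq z).2
      _ = (Fintype.card 𝕏 : ℝ) * (1 + α) := by
          rw [Finset.sum_const, Finset.card_univ, nsmul_eq_mul]
  have hS0 : 0 < S := by
    have h1 : 0 < (Fintype.card 𝕏 : ℝ) * (1 - α) := mul_pos hN (by linarith)
    nlinarith
  have hqx := hq x
  rw [hr, abs_le]
  constructor
  · rw [neg_le, neg_sub, sub_le_iff_le_add, ← sub_le_iff_le_add', ← sub_div,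
      div_le_div_iff₀ hN hS0]
    have key : (1 - 4*α) * (n * S) ≤ (Fintype.card 𝕏 : ℝ) * (n * (p x / C x)) := by
      nlinarith [hqx.1, hSu, hN, hα0, mul_pos hN hα0,
        mul_nonneg hN.le (mul_nonneg hα0.le hα0.le)]
    nlinarith [key, hn, hS0, hN]
  · rw [sub_le_iff_le_add, ← add_div, div_le_div_iff₀ hS0 hN]
    have key : (Fintype.card 𝕏 : ℝ) * (n * (p x / C x)) ≤ (1 + 4*α) * (n * S) := by
      nlinarith [hqx.2, hSl, hN, hα0, mul_pos hN hα0,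
        mul_nonneg hN.le (mul_nonneg hα0.le (by linarith : (0:ℝ) ≤ 1 - 2*α))]
    nlinarith [key, hn, hS0, hN]
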